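/- Let q be a power of an odd prime. For any multiplicative characters A, B, C of 𝔽_q^× and any λ ∈ 𝔽_q, the following two identities hold: ℙ_D^{(1)}[A; B; C; λ] = B̄(1−λ)·ℙ_D^{(1)}[ĀC; B; C; λ/(λ−1)] + δ(1−λ)·J(A, C·(AB)⁻¹), and ℙ_D^{(1)}[A; B; C; λ] = Ā(1−λ)·ℙ_D^{(1)}[A; C·B̄; C; λ/(λ−1)] + δ(1−λ)·J(A, C·(AB)⁻¹). (When λ = 1 the first term on each right-hand side vanishes since B̄(0) = Ā(0) = 0, so any convention for division by zero gives a valid statement.) -/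

import Mathlib

open Finset

/-- Jacobi sum `J(A,B) = Σ_x A(x) B(1-x)`. -/
noncomputable def jacobiSum' {F : Type} [Field F] [Fintype F] (A B : MulChar F ℂ) : ℂ :=
  ∑ x : F, A x * B (1 - x)

/-- One-variable finite-field period function `ℙ_D^{(1)}[A; B; C; λ]`. -/
noncomputable def P1 {F : Type} [Field F] [Fintype F] (A B C : MulChar F ℂ) (l : F) : ℂ :=
  ∑ y : F, A y * (C * A⁻¹) (1 - y) * B⁻¹ (1 - l * y)

/-- Two-variable finite-field Appell–Lauricella period function `ℙ_D^{(2)}`. -/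
noncomputable def P2 {F : Type} [Field F] [Fintype F] (A B₁ B₂ C : MulChar F ℂ) (l₁ l₂ : F) : ℂ :=
  ∑ y : F, A y * (C * A⁻¹) (1 - y) * B₁⁻¹ (1 - l₁ * y) * B₂⁻¹ (1 - l₂ * y)

/-- n-variable finite-field Appell–Lauricella period function `ℙ_D^{(n)}`. -/
noncomputable def PDn {F : Type} [Field F] [Fintype F] (n : ℕ) (A : MulChar F ℂ)
    (B : Fin n → MulChar F ℂ) (C : MulChar F ℂ) (l : Fin n → F) : ℂ :=
  ∑ y : F, A y * (C * A⁻¹) (1 - y) * ∏ i, (B i)⁻¹ (1 - l i * y)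

/-- Normalized two-variable Appell–Lauricella function `𝔽_D^{(2)}`. -/
noncomputable def F2 {F : Type} [Field F] [Fintype F] (A B₁ B₂ C : MulChar F ℂ) (l₁ l₂ : F) : ℂ :=
  P2 A B₁ B₂ C l₁ l₂ / jacobiSum' A (C * A⁻¹)

/-- Normalized n-variable Appell–Lauricella function `𝔽_D^{(n)}`. -/
noncomputable def FDn {F : Type} [Field F] [Fintype F] (n : ℕ) (A : MulChar F ℂ)
    (B : Fin n → MulChar F ℂ) (C : MulChar F ℂ) (l : Fin n → F) : ℂ :=
  PDn n A B C l / jacobiSum' A (C * A⁻¹)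

/-- Finite-field Gauss hypergeometric function `₂𝔽₁[A,B;C;λ] = ℙ_D^{(1)}[B;A;C;λ]/J(B,C B̄)`. -/
noncomputable def twoF1 {F : Type} [Field F] [Fintype F] (A B C : MulChar F ℂ) (l : F) : ℂ :=
  P1 B A C l / jacobiSum' B (C * B⁻¹)

open scoped Classical in
/-- `δ(x) = 1` if `x = 0`, else `0`. -/
noncomputable def deltaC {F : Type} [Field F] [Fintype F] (x : F) : ℂ :=
  if x = 0 then 1 else 0

noncomputable instance {F : Type} [Field F] [Fintype F] : Fintype (MulChar F ℂ) :=
  Fintype.ofFinite _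

/-- Character binomial coefficient `(A choose χ) = -χ(-1) J(A, χ̄)`. -/
noncomputable def charBinom {F : Type} [Field F] [Fintype F] (A χ : MulChar F ℂ) : ℂ :=
  -χ (-1) * jacobiSum' A χ⁻¹


section AuxStatement10
variable {F : Type} [Field F] [Fintype F]

lemma mcMapInv (χ : MulChar F ℂ) (x : F) : χ x⁻¹ = (χ x)⁻¹ := by
  rw [← MulChar.inv_apply', MulChar.inv_apply_eq_inv']

lemma mcNeZero (χ : MulChar F ℂ) {x : F} (hx : x ≠ 0) : χ x ≠ 0 := by
  have h : χ x * χ x⁻¹ = 1 := by rw [← map_mul, mul_inv_cancel₀ hx, map_one]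
  intro h0; rw [h0, zero_mul] at h; exact zero_ne_one h

lemma P1_at_one (A B C : MulChar F ℂ) : P1 A B C 1 = jacobiSum' A (C * (A * B)⁻¹) := by
  unfold P1 jacobiSum'
  refine Finset.sum_congr rfl fun x _ => ?_
  rw [one_mul]
  simp only [MulChar.mul_apply, MulChar.inv_apply_eq_inv', mul_inv]
  ring

lemma key1 (A B C : MulChar F ℂ) {l : F} (hl : l ≠ 1) :
    P1 A B C l = B⁻¹ (1 - l) * P1 (A⁻¹ * C) B C (l / (l - 1)) := by
  have hl1 : l - 1 ≠ 0 := sub_ne_zero.mpr hl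
  have hc : C * (A⁻¹ * C)⁻¹ = A := by group
  unfold P1
  rw [Finset.mul_sum]
  refine Fintype.sum_equiv (Equiv.subLeft 1) _ _ fun y => ?_
  simp only [Equiv.subLeft_apply, sub_sub_cancel, hc]
  have harg : 1 - l * y = (1 - l) * (1 - l / (l - 1) * (1 - y)) := by
    field_simp
    ring
  rw [harg, map_mul]
  simp only [MulChar.mul_apply, MulChar.inv_apply_eq_inv']
  ring

lemma key2 (A B C : MulChar F ℂ) {l : F} (hl : l ≠ 1) :
    P1 A B C l = A⁻¹ (1 - l) * P1 A (C * B⁻¹) C (l / (l - 1)) := by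
  classical
  have hl1 : l - 1 ≠ 0 := sub_ne_zero.mpr hl
  have h1l : (1 : F) - l ≠ 0 := fun h => hl (by linear_combination -h)
  have hden_ne : ∀ u : F, 1 - l / (l - 1) * u ≠ 0 → 1 - l + l * u ≠ 0 := by
    intro u he h0
    apply he
    have hl0 : l ≠ 0 := by
      intro h; rw [h] at h0; simp at h0
    have hu' : u = (l - 1) / l := by
      field_simp
      linear_combination h0
    rw [hu']
    field_simp
    ring
  unfold P1
  rw [Finset.mul_sum]
  have hLHS : (∑ y : F, A y * (C * A⁻¹) (1 - y) * B⁻¹ (1 - l * y))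
      = ∑ y ∈ Finset.univ.filter (fun y => 1 - l * y ≠ 0),
          A y * (C * A⁻¹) (1 - y) * B⁻¹ (1 - l * y) := by
    refine (Finset.sum_filter_of_ne (p := fun y => 1 - l * y ≠ 0) ?_).symm
    intro x _ hfx hx
    exact hfx (by rw [hx, MulChar.map_zero, mul_zero])
  have hRHS : (∑ u : F, A⁻¹ (1 - l) *
        (A u * (C * A⁻¹) (1 - u) * (C * B⁻¹)⁻¹ (1 - l / (l - 1) * u)))
      = ∑ u ∈ Finset.univ.filter (fun u => 1 - l / (l - 1) * u ≠ 0),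
          A⁻¹ (1 - l) * (A u * (C * A⁻¹) (1 - u) * (C * B⁻¹)⁻¹ (1 - l / (l - 1) * u)) := by
    refine (Finset.sum_filter_of_ne (p := fun u => 1 - l / (l - 1) * u ≠ 0) ?_).symm
    intro x _ hfx hx
    exact hfx (by rw [hx, MulChar.map_zero, mul_zero, mul_zero])
  rw [hLHS, hRHS]
  refine Finset.sum_bij' (fun y _ => (1 - l) * y / (1 - l * y))
    (fun u _ => u / (1 - l + l * u)) ?_ ?_ ?_ ?_ ?_
  · intro y hy
    have hd : 1 - l * y ≠ 0 := (Finset.mem_filter.mp hy).2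
    simp only [Finset.mem_filter, Finset.mem_univ, true_and]
    have h3 : 1 - l / (l - 1) * ((1 - l) * y / (1 - l * y)) = (1 - l * y)⁻¹ := by
      rw [inv_eq_one_div, eq_div_iff hd]
      field_simp
      ring
    rw [h3]
    exact inv_ne_zero hd
  · intro u hu
    have he : 1 - l / (l - 1) * u ≠ 0 := (Finset.mem_filter.mp hu).2
    have hden : 1 - l + l * u ≠ 0 := hden_ne u he
    simp only [Finset.mem_filter, Finset.mem_univ, true_and]
    have h4 : 1 - l * (u / (1 - l + l * u)) = (1 - l) / (1 - l + l * u) := by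
      rw [eq_div_iff hden]
      field_simp
      ring
    rw [h4]
    exact div_ne_zero h1l hden
  · intro y hy
    have hd : 1 - l * y ≠ 0 := (Finset.mem_filter.mp hy).2
    have hden : 1 - l + l * ((1 - l) * y / (1 - l * y)) = (1 - l) / (1 - l * y) := by
      rw [eq_div_iff hd]
      field_simp
      ring
    rw [hden, div_div_div_cancel_right₀ hd]
    exact mul_div_cancel_left₀ y h1l
  · intro u hu
    have he : 1 - l / (l - 1) * u ≠ 0 := (Finset.mem_filter.mp hu).2
    have hden : 1 - l + l * u ≠ 0 := hden_ne u he
    have h2 : 1 - l * (u / (1 - l + l * u)) = (1 - l) / (1 - l + l * u) := by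
      rw [eq_div_iff hden]
      field_simp
      ring
    rw [h2, mul_div_assoc', div_div_div_cancel_right₀ hden]
    exact mul_div_cancel_left₀ u h1l
  · intro y hy
    have hd : 1 - l * y ≠ 0 := (Finset.mem_filter.mp hy).2
    have h1 : (1 - l) * y / (1 - l * y) = (1 - l) * (y * (1 - l * y)⁻¹) := by
      rw [div_eq_mul_inv]; ring
    have h2 : 1 - (1 - l) * y / (1 - l * y) = (1 - y) * (1 - l * y)⁻¹ := by
      rw [← div_eq_mul_inv, eq_div_iff hd]
      field_simp
      ring
    have h3 : 1 - l / (l - 1) * ((1 - l) * y / (1 - l * y)) = (1 - l * y)⁻¹ := by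
      rw [inv_eq_one_div, eq_div_iff hd]
      field_simp
      ring
    rw [h2, h3, h1]
    simp only [map_mul, mcMapInv, MulChar.mul_apply, MulChar.inv_apply_eq_inv', mul_inv, inv_inv]
    rw [show (1 : F) - l * y = 1 - y * l from by ring]
    have hA : A (1 - l) ≠ 0 := mcNeZero A h1l
    have hd' : 1 - y * l ≠ 0 := by rwa [mul_comm]
    have hAd : A (1 - y * l) ≠ 0 := mcNeZero A hd'
    have hCd : C (1 - y * l) ≠ 0 := mcNeZero C hd'
    field_simp

end AuxStatement10


/-- Pfaff–Kummer type transformations `λ ↦ λ/(λ-1)` for `ℙ_D^{(1)}`. -/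


theorem statement_10 (F : Type) [Field F] [Fintype F] (hq : Odd (Fintype.card F))
    (A B C : MulChar F ℂ) (l : F) :
    P1 A B C l =
        B⁻¹ (1 - l) * P1 (A⁻¹ * C) B C (l / (l - 1)) +
          deltaC (1 - l) * jacobiSum' A (C * (A * B)⁻¹) ∧
      P1 A B C l =
        A⁻¹ (1 - l) * P1 A (C * B⁻¹) C (l / (l - 1)) +
          deltaC (1 - l) * jacobiSum' A (C * (A * B)⁻¹)  := by
  have key_one : P1 A B C 1 = jacobiSum' A (C * (A * B)⁻¹) := P1_at_one A B C
  by_cases hl : l = 1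
  · subst hl
    have hz : (1 : F) - 1 = 0 := by ring
    constructor <;>
      rw [hz, MulChar.map_zero, zero_mul, deltaC, if_pos rfl, one_mul, zero_add, key_one]
  · have hz : (1 : F) - l ≠ 0 := fun h => hl (by linear_combination -h)
    have hδ : deltaC (1 - l) = (0 : ℂ) := by rw [deltaC, if_neg hz]
    rw [hδ, zero_mul, add_zero, add_zero]
    exact ⟨key1 A B C hl, key2 A B C hl⟩
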